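/- Let (R(t))_{t>0} ⊆ L(X,Y) be a strongly continuous operator family with ∫_0^∞ ‖R(s)‖ ds < ∞. If f : ℝ → X is quasi-asymptotically almost periodic, then the infinite convolution F(t) = ∫_{−∞}^{t} R(t−s) f(s) ds is quasi-asymptotically almost periodic from ℝ into Y. -/

import Mathlib

open Set Filter MeasureTheory

def IsQAAP {X : Type*} [NormedAddCommGroup X] (I : Set ℝ) (f : ℝ → X) : Prop :=
  ContinuousOn f I ∧ (∃ C, ∀ t ∈ I, ‖f t‖ ≤ C) ∧
  ∀ ε > (0:ℝ), ∃ L > (0:ℝ), ∀ a : ℝ, Set.Icc a (a + L) ⊆ I →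
    ∃ τ ∈ Set.Icc a (a + L), ∃ M > (0:ℝ),
      ∀ t ∈ I, M ≤ |t| → ‖f (t + τ) - f t‖ ≤ ε

def IsAAP {X : Type*} [NormedAddCommGroup X] (I : Set ℝ) (f : ℝ → X) : Prop :=
  ContinuousOn f I ∧ (∃ C, ∀ t ∈ I, ‖f t‖ ≤ C) ∧
  ∀ ε > (0:ℝ), ∃ l > (0:ℝ), ∃ M > (0:ℝ), ∀ a : ℝ, Set.Icc a (a + l) ⊆ I →
    ∃ τ ∈ Set.Icc a (a + l),
      ∀ t ∈ I, M ≤ |t| → M ≤ |t + τ| → ‖f (t + τ) - f t‖ ≤ ε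

/-- Strong measurability of `s ↦ R s (g s)` on `Ioi 0` for strongly continuous `R`
and continuous `g`. -/
lemma aesm_apply_aux {X Y : Type*}
    [NormedAddCommGroup X] [NormedSpace ℝ X]
    [NormedAddCommGroup Y] [NormedSpace ℝ Y]
    (R : ℝ → X →L[ℝ] Y)
    (hRc : ∀ x : X, ContinuousOn (fun t => R t x) (Set.Ioi 0))
    (g : ℝ → X) (hg : Continuous g) :
    AEStronglyMeasurable (fun s => R s (g s))
      (MeasureTheory.volume.restrict (Set.Ioi (0:ℝ))) := by
  have hsm := hg.stronglyMeasurable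
  have key : ∀ φ : SimpleFunc ℝ X, AEStronglyMeasurable (fun s => R s (φ s))
      (MeasureTheory.volume.restrict (Set.Ioi (0:ℝ))) := by
    intro φ
    induction φ using SimpleFunc.induction with
    | @const c s hs =>
        have heq : (fun x => R x ((SimpleFunc.piecewise s hs (SimpleFunc.const ℝ c)
            (SimpleFunc.const ℝ 0)) x)) = Set.indicator s (fun x => R x c) := by
          ext x
          by_cases hx : x ∈ s <;>
            simp [SimpleFunc.piecewise_apply, hx, Set.indicator]
        rw [heq]
        exact (((hRc c).aestronglyMeasurable measurableSet_Ioi)).indicator hs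
    | @add φ ψ hd hφ hψ =>
        have heq : (fun x => R x ((φ + ψ) x)) = fun x => R x (φ x) + R x (ψ x) := by
          ext x; simp
        rw [heq]
        exact hφ.add hψ
  refine aestronglyMeasurable_of_tendsto_ae atTop (fun n => key (hsm.approx n)) ?_
  filter_upwards with s
  exact ((R s).continuous.tendsto _).comp (hsm.tendsto_approx s)

/-- Invariance of quasi-asymptotic almost periodicity under the infinite
convolution product F(t) = ∫_{−∞}^t R(t−s) f(s) ds = ∫_0^∞ R(s) f(t−s) ds. -/
theorem isQAAP_infinite_convolution {X Y : Type*}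
    [NormedAddCommGroup X] [NormedSpace ℝ X]
    [NormedAddCommGroup Y] [NormedSpace ℝ Y] [CompleteSpace Y]
    (R : ℝ → X →L[ℝ] Y)
    (hRc : ∀ x : X, ContinuousOn (fun t => R t x) (Set.Ioi 0))
    (hRint : MeasureTheory.IntegrableOn (fun s => ‖R s‖) (Set.Ioi 0))
    (f : ℝ → X) (hf : IsQAAP Set.univ f) :
    IsQAAP Set.univ (fun t => ∫ s in Set.Ioi (0:ℝ), (R s) (f (t - s))) := by
  obtain ⟨hfc, ⟨C, hC⟩, hfq⟩ := hf
  have hfcont : Continuous f := continuousOn_univ.mp hfc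
  set C0 : ℝ := max C 0 with hC0def
  have hC0 : ∀ t : ℝ, ‖f t‖ ≤ C0 := fun t => (hC t (mem_univ t)).trans (le_max_left _ _)
  have hC0nonneg : (0:ℝ) ≤ C0 := le_max_right _ _
  -- measurability of the integrands
  have hmeas : ∀ c : ℝ, AEStronglyMeasurable (fun s => R s (f (c - s)))
      (MeasureTheory.volume.restrict (Set.Ioi (0:ℝ))) := fun c =>
    aesm_apply_aux R hRc _ (hfcont.comp (continuous_const.sub continuous_id))
  -- integrability of the integrands
  have hint : ∀ c : ℝ, MeasureTheory.IntegrableOn (fun s => R s (f (c - s))) (Set.Ioi 0) := by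
    intro c
    refine (hRint.mul_const C0).mono' (hmeas c) ?_
    filter_upwards with s
    calc ‖R s (f (c - s))‖ ≤ ‖R s‖ * ‖f (c - s)‖ := (R s).le_opNorm _
      _ ≤ ‖R s‖ * C0 := mul_le_mul_of_nonneg_left (hC0 _) (norm_nonneg _)
  set I₁ : ℝ := ∫ s in Set.Ioi (0:ℝ), ‖R s‖ with hI₁def
  have hI₁ : (0:ℝ) ≤ I₁ :=
    setIntegral_nonneg measurableSet_Ioi (fun s _ => norm_nonneg _)
  refine ⟨?_, ⟨I₁ * C0, ?_⟩, ?_⟩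
  · -- Continuity
    rw [continuousOn_univ, continuous_iff_continuousAt]
    intro t₀
    apply MeasureTheory.continuousAt_of_dominated (bound := fun s => ‖R s‖ * C0)
    · filter_upwards with t using hmeas t
    · filter_upwards with t
      filter_upwards with s
      calc ‖R s (f (t - s))‖ ≤ ‖R s‖ * ‖f (t - s)‖ := (R s).le_opNorm _
        _ ≤ ‖R s‖ * C0 := mul_le_mul_of_nonneg_left (hC0 _) (norm_nonneg _)
    · exact hRint.mul_const C0
    · filter_upwards with s
      exact ((R s).continuous.continuousAt).comp
        ((hfcont.continuousAt).comp ((continuous_id.sub continuous_const).continuousAt))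
  · -- Boundedness
    intro t _
    have := MeasureTheory.norm_integral_le_of_norm_le (hRint.mul_const C0)
      (Eventually.of_forall (fun s => by
        calc ‖R s (f (t - s))‖ ≤ ‖R s‖ * ‖f (t - s)‖ := (R s).le_opNorm _
          _ ≤ ‖R s‖ * C0 := mul_le_mul_of_nonneg_left (hC0 _) (norm_nonneg _)))
    simpa [MeasureTheory.integral_mul_const] using this
  · -- quasi-AAP property
    intro ε hε
    have hεI : (0:ℝ) < ε / (2 * (I₁ + 1)) := by positivity
    obtain ⟨L, hL, hLprop⟩ := hfq (ε / (2 * (I₁ + 1))) hεI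
    refine ⟨L, hL, ?_⟩
    intro a _
    obtain ⟨τ, hτmem, M_f, hMf, hτ⟩ := hLprop a (subset_univ _)
    set ε' : ℝ := ε / (2 * (I₁ + 1)) with hε'def
    set δ : ℝ := ε / (2 * (2 * C0 + 1)) with hδdef
    have hδpos : (0:ℝ) < δ := by positivity
    -- find N with small tail
    have htail : ∃ N : ℕ, 1 ≤ N ∧ ∫ s in Set.Ioi (N:ℝ), ‖R s‖ ≤ δ := by
      have hsplit : ∀ N : ℕ, ∫ s in Set.Ioi ((N:ℝ)), ‖R s‖
          = I₁ - ∫ s in (0:ℝ)..(N:ℝ), ‖R s‖ := by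
        intro N
        have hN0 : (0:ℝ) ≤ (N:ℝ) := Nat.cast_nonneg N
        have hU : Set.Ioc (0:ℝ) (N:ℝ) ∪ Set.Ioi ((N:ℝ)) = Set.Ioi (0:ℝ) :=
          Ioc_union_Ioi_eq_Ioi hN0
        have hdisj : Disjoint (Set.Ioc (0:ℝ) (N:ℝ)) (Set.Ioi ((N:ℝ))) :=
          Ioc_disjoint_Ioi le_rfl
        have h1 : MeasureTheory.IntegrableOn (fun s => ‖R s‖) (Set.Ioc (0:ℝ) (N:ℝ)) :=
          hRint.mono_set (by rw [← hU]; exact subset_union_left)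
        have h2 : MeasureTheory.IntegrableOn (fun s => ‖R s‖) (Set.Ioi ((N:ℝ))) :=
          hRint.mono_set (by rw [← hU]; exact subset_union_right)
        have := MeasureTheory.setIntegral_union hdisj measurableSet_Ioi h1 h2
          (f := fun s => ‖R s‖) (μ := MeasureTheory.volume)
        rw [hU] at this
        rw [intervalIntegral.integral_of_le hN0, hI₁def, this]
        ring
      have hlim : Tendsto (fun N : ℕ => ∫ s in (0:ℝ)..(N:ℝ), ‖R s‖) atTop (nhds I₁) :=
        MeasureTheory.intervalIntegral_tendsto_integral_Ioi 0 hRint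
          tendsto_natCast_atTop_atTop
      have hlim0 : Tendsto (fun N : ℕ => I₁ - ∫ s in (0:ℝ)..(N:ℝ), ‖R s‖) atTop
          (nhds 0) := by
        have := (tendsto_const_nhds (x := I₁) (f := atTop (α := ℕ))).sub hlim
        simpa using this
      have := hlim0.eventually (eventually_le_nhds hδpos)
      obtain ⟨N₀, hN₀⟩ := (this.and (eventually_ge_atTop 1)).exists
      exact ⟨N₀, hN₀.2, by rw [hsplit]; exact hN₀.1⟩
    obtain ⟨N, hN1, hNtail⟩ := htail
    have hNpos : (0:ℝ) < (N:ℝ) := by exact_mod_cast hN1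
    refine ⟨τ, hτmem, (N:ℝ) + M_f, by positivity, ?_⟩
    intro t _ ht
    simp only
    rw [← MeasureTheory.integral_sub (hint (t + τ)) (hint t)]
    set bound : ℝ → ℝ := fun s => ‖R s‖ * ε' +
      Set.indicator (Set.Ioi ((N:ℝ))) (fun s => ‖R s‖ * (2 * C0)) s with hbdef
    have hbint : MeasureTheory.IntegrableOn bound (Set.Ioi (0:ℝ)) := by
      refine (hRint.mul_const ε').add ?_
      exact ((hRint.mul_const (2 * C0)).indicator measurableSet_Ioi)
    have hptwise : ∀ᵐ s ∂(MeasureTheory.volume.restrict (Set.Ioi (0:ℝ))),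
        ‖R s (f (t + τ - s)) - R s (f (t - s))‖ ≤ bound s := by
      filter_upwards [MeasureTheory.ae_restrict_mem measurableSet_Ioi] with s hs
      have hkey : ‖R s (f (t + τ - s)) - R s (f (t - s))‖
          ≤ ‖R s‖ * ‖f (t + τ - s) - f (t - s)‖ := by
        rw [← (R s).map_sub]
        exact (R s).le_opNorm _
      by_cases hcase : M_f ≤ |t - s|
      · have hτ' := hτ (t - s) (mem_univ _) hcase
        have harg : t - s + τ = t + τ - s := by ring
        rw [harg] at hτ'
        have h1 : ‖R s (f (t + τ - s)) - R s (f (t - s))‖ ≤ ‖R s‖ * ε' :=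
          hkey.trans (mul_le_mul_of_nonneg_left hτ' (norm_nonneg _))
        refine h1.trans ?_
        have hind : (0:ℝ) ≤ Set.indicator (Set.Ioi ((N:ℝ)))
            (fun s => ‖R s‖ * (2 * C0)) s := by
          apply Set.indicator_nonneg
          intro x _
          positivity
        rw [hbdef]
        simp only
        linarith
      · push_neg at hcase
        -- then t > 0 and s > t - M_f ≥ N
        have htpos : (N:ℝ) + M_f ≤ t := by
          rcases abs_cases t with h | h
          · linarith [h.1, ht]
          · exfalso
            have hts : t - s < t := by linarith [hs.out]
            have : t ≤ -((N:ℝ) + M_f) := by linarith [h.1, ht]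
            have : |t - s| ≥ M_f := by
              rw [abs_sub_comm, abs_of_nonneg (by linarith)]
              linarith
            linarith
        have hsN : s ∈ Set.Ioi ((N:ℝ)) := by
          simp only [Set.mem_Ioi]
          have : t - s < M_f := lt_of_abs_lt (abs_sub_comm t s ▸ (abs_sub_comm s t ▸ hcase))
          linarith
        have h2C : ‖f (t + τ - s) - f (t - s)‖ ≤ 2 * C0 := by
          calc ‖f (t + τ - s) - f (t - s)‖ ≤ ‖f (t + τ - s)‖ + ‖f (t - s)‖ :=
              norm_sub_le _ _
            _ ≤ C0 + C0 := add_le_add (hC0 _) (hC0 _)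
            _ = 2 * C0 := by ring
        have h1 : ‖R s (f (t + τ - s)) - R s (f (t - s))‖ ≤ ‖R s‖ * (2 * C0) :=
          hkey.trans (mul_le_mul_of_nonneg_left h2C (norm_nonneg _))
        rw [hbdef]
        simp only
        rw [Set.indicator_of_mem hsN]
        have : (0:ℝ) ≤ ‖R s‖ * ε' := by positivity
        linarith
    have hest := MeasureTheory.norm_integral_le_of_norm_le hbint hptwise
    refine hest.trans ?_
    have hbsplit : ∫ s in Set.Ioi (0:ℝ), bound s
        = I₁ * ε' + ∫ s in Set.Ioi ((N:ℝ)), ‖R s‖ * (2 * C0) := by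
      rw [hbdef]
      rw [MeasureTheory.integral_add (hRint.mul_const ε')
        ((hRint.mul_const (2 * C0)).indicator measurableSet_Ioi)]
      congr 1
      · rw [MeasureTheory.integral_mul_const]
      · rw [MeasureTheory.setIntegral_indicator measurableSet_Ioi]
        rw [Set.Ioi_inter_Ioi, sup_eq_right.mpr hNpos.le]
    rw [hbsplit]
    have htail2 : ∫ s in Set.Ioi ((N:ℝ)), ‖R s‖ * (2 * C0) ≤ δ * (2 * C0) := by
      rw [MeasureTheory.integral_mul_const]
      exact mul_le_mul_of_nonneg_right hNtail (by positivity)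
    have h1 : I₁ * ε' ≤ ε / 2 := by
      rw [hε'def, ← mul_div_assoc]
      rw [div_le_div_iff₀ (by positivity) (by norm_num : (0:ℝ) < 2)]
      nlinarith
    have h2 : δ * (2 * C0) ≤ ε / 2 := by
      rw [hδdef]
      rw [div_mul_eq_mul_div, div_le_div_iff₀ (by positivity) (by norm_num)]
      nlinarith
    linarith
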